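/- arXiv:1812.00461 — 4 statements merged into one kernel-verified Lean document; each statement's English description precedes it below -/
import Mathlib

section
/- Let A(t) be the generator of a C_0-quasi-semigroup {R(t,s)} on a Banach space X with A(t+h)=A(t) for all t,h ≥ 0. Then for all λ ∈ ℂ, t,s ≥ 0 and n ∈ ℕ: N[(λ − A(t))^n] ⊆ N[(e^{λs} − R(t,s))^n], where N denotes kernel. -/
open Filter Topology MeasureTheory Set

variable {X : Type*}

/-- A strongly continuous quasi-semigroup of bounded operators. -/
def IsQuasiSemigroup [NormedAddCommGroup X] [NormedSpace ℂ X]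
    (R : ℝ → ℝ → X →L[ℂ] X) : Prop :=
  (∀ t : ℝ, 0 ≤ t → R t 0 = 1) ∧
  (∀ t s r : ℝ, 0 ≤ t → 0 ≤ s → 0 ≤ r → R t (s + r) = (R (t + r) s).comp (R t r)) ∧
  (∀ t : ℝ, 0 ≤ t → ∀ x : X, Tendsto (fun s => R t s x) (nhdsWithin 0 (Set.Ici 0)) (nhds x)) ∧
  (∃ M : ℝ → ℝ, Continuous M ∧ Monotone M ∧ (∀ u : ℝ, 0 ≤ u → 1 ≤ M u) ∧
    ∀ t s : ℝ, 0 ≤ t → 0 ≤ s → ‖R t s‖ ≤ M (t + s))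

/-- The limit defining the generator at time `t`. -/
def GenLimit [NormedAddCommGroup X] [NormedSpace ℂ X]
    (R : ℝ → ℝ → X →L[ℂ] X) (t : ℝ) (x y : X) : Prop :=
  Tendsto (fun s : ℝ => s⁻¹ • (R t s x - x)) (nhdsWithin 0 (Set.Ioi 0)) (nhds y)

/-- The auxiliary backwards limit defining the generator at time `t`. -/
def GenLimit' [NormedAddCommGroup X] [NormedSpace ℂ X]
    (R : ℝ → ℝ → X →L[ℂ] X) (t : ℝ) (x y : X) : Prop :=
  Tendsto (fun s : ℝ => s⁻¹ • (R (t - s) s x - x)) (nhdsWithin 0 (Set.Ioi 0)) (nhds y)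

/-- `A` is the generator family of the quasi-semigroup `R`, with (common) domain `D`. -/
def IsGenerator [NormedAddCommGroup X] [NormedSpace ℂ X]
    (R : ℝ → ℝ → X →L[ℂ] X) (A : ℝ → X → X) (D : Set X) : Prop :=
  (∀ x : X, x ∈ D ↔
    ((∃ y, GenLimit R 0 x y) ∧ ∀ t : ℝ, 0 < t → ∃ y, GenLimit R t x y ∧ GenLimit' R t x y)) ∧
  (∀ t : ℝ, 0 ≤ t → ∀ x ∈ D, GenLimit R t x (A t x))

section Aux

variable [NormedAddCommGroup X] [NormedSpace ℂ X]
variable {R : ℝ → ℝ → X →L[ℂ] X} {A : ℝ → X → X} {D : Set X}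

/-- The composition law in the form we use it. -/
lemma qsg_law (hR : IsQuasiSemigroup R) {t s h u : ℝ} (ht : 0 ≤ t)
    (h0 : 0 ≤ h) (hu : h ≤ u) (hus : u ≤ s) (y : X) :
    R (t + h) (s - h) y = R (t + u) (s - u) (R (t + h) (u - h) y) := by
  have := hR.2.1 (t + h) (s - u) (u - h) (by linarith) (by linarith) (by linarith)
  rw [show s - u + (u - h) = s - h by ring, show t + h + (u - h) = t + u by ring] at this
  rw [this, ContinuousLinearMap.comp_apply]

/-- Right strong continuity of `u ↦ R (t+u) (s-u) y` (any `y`). -/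
lemma qsg_tendsto_right (hR : IsQuasiSemigroup R) {t s h : ℝ} (ht : 0 ≤ t)
    (h0 : 0 ≤ h) (hhs : h ≤ s) (y : X) :
    Tendsto (fun u => R (t + u) (s - u) y) (𝓝[Icc h s] h) (𝓝 (R (t + h) (s - h) y)) := by
  obtain ⟨M, hMc, hMm, hM1, hMb⟩ := hR.2.2.2
  rw [← tendsto_sub_nhds_zero_iff]
  refine squeeze_zero_norm' (a := fun u => M (t + s) * ‖R (t + h) (u - h) y - y‖) ?_ ?_
  · filter_upwards [self_mem_nhdsWithin] with u hu
    obtain ⟨hu1, hu2⟩ := hu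
    rw [qsg_law hR ht h0 hu1 hu2 y, ← map_sub]
    calc ‖(R (t + u) (s - u)) (y - (R (t + h)) (u - h) y)‖
        ≤ ‖R (t + u) (s - u)‖ * ‖y - R (t + h) (u - h) y‖ := ContinuousLinearMap.le_opNorm _ _
      _ ≤ M ((t + u) + (s - u)) * ‖y - R (t + h) (u - h) y‖ := by
          apply mul_le_mul_of_nonneg_right (hMb _ _ (by linarith) (by linarith)) (norm_nonneg _)
      _ = M (t + s) * ‖R (t + h) (u - h) y - y‖ := by
          rw [show t + u + (s - u) = t + s by ring, norm_sub_rev]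
  · have h1 : Tendsto (fun u : ℝ => u - h) (𝓝[Icc h s] h) (𝓝[Ici 0] 0) := by
      rw [tendsto_nhdsWithin_iff]
      constructor
      · have h1 : Tendsto (fun u : ℝ => u - h) (𝓝 h) (𝓝 (h - h)) :=
          (continuous_id.sub continuous_const).tendsto h
        rw [sub_self] at h1
        exact h1.mono_left (nhdsWithin_le_nhds (s := Icc h s))
      · filter_upwards [self_mem_nhdsWithin] with u hu
        exact sub_nonneg.2 hu.1
    have h3 : Tendsto (fun u => R (t + h) (u - h) y) (𝓝[Icc h s] h) (𝓝 y) :=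
      (hR.2.2.1 (t + h) (by linarith) y).comp h1
    have h4 : Tendsto (fun u => M (t + s) * ‖R (t + h) (u - h) y - y‖) (𝓝[Icc h s] h)
        (𝓝 (M (t + s) * ‖y - (y : X)‖)) :=
      tendsto_const_nhds.mul ((h3.sub (tendsto_const_nhds (x := y))).norm)
    simpa using h4

/-- From `GenLimit'`: backwards strong continuity. -/
lemma qsg_tendsto_back (hA : IsGenerator R A D) {z : X} (hz : z ∈ D) {τ : ℝ} (hτ : 0 < τ) :
    Tendsto (fun ε => R (τ - ε) ε z) (𝓝[Ioi 0] 0) (𝓝 z) := by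
  obtain ⟨y, -, hy⟩ := ((hA.1 z).1 hz).2 τ hτ
  have h0 : Tendsto (fun ε : ℝ => ε) (𝓝[Ioi 0] 0) (𝓝 0) := tendsto_id.mono_left nhdsWithin_le_nhds
  have h1 : Tendsto (fun ε : ℝ => ε • (ε⁻¹ • (R (τ - ε) ε z - z))) (𝓝[Ioi 0] 0)
      (𝓝 ((0 : ℝ) • y)) := h0.smul hy
  rw [zero_smul] at h1
  have h2 : Tendsto (fun ε : ℝ => R (τ - ε) ε z - z) (𝓝[Ioi 0] 0) (𝓝 0) := by
    apply h1.congr'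
    filter_upwards [self_mem_nhdsWithin] with ε hε
    rw [smul_inv_smul₀ (ne_of_gt hε)]
  simpa using tendsto_sub_nhds_zero_iff.1 h2

end Aux

section Aux2

variable [NormedAddCommGroup X] [NormedSpace ℂ X]
variable {R : ℝ → ℝ → X →L[ℂ] X} {A : ℝ → X → X} {D : Set X}

/-- Backwards strong continuity on `Ici 0`. -/
lemma qsg_tendsto_back' (hR : IsQuasiSemigroup R) (hA : IsGenerator R A D)
    {z : X} (hz : z ∈ D) {τ : ℝ} (hτ : 0 < τ) :
    Tendsto (fun ε => R (τ - ε) ε z) (𝓝[Ici 0] 0) (𝓝 z) := by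
  rw [← Ioi_insert, nhdsWithin_insert, tendsto_sup]
  constructor
  · have hv : R (τ - 0) 0 z = z := by rw [hR.1 (τ - 0) (by linarith)]; rfl
    have hp := tendsto_pure_nhds (fun ε => R (τ - ε) ε z) 0
    rwa [hv] at hp
  · exact qsg_tendsto_back hA hz hτ

/-- Left strong continuity of `u ↦ R (t+u) (s-u) z` for `z ∈ D`. -/
lemma qsg_tendsto_left (hR : IsQuasiSemigroup R) (hA : IsGenerator R A D)
    {t s h : ℝ} (ht : 0 ≤ t) (h0 : 0 ≤ h) (hhs : h ≤ s) {z : X} (hz : z ∈ D) :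
    Tendsto (fun u => R (t + u) (s - u) z) (𝓝[Icc 0 h] h) (𝓝 (R (t + h) (s - h) z)) := by
  rcases eq_or_lt_of_le h0 with rfl | hpos
  · rw [show Icc (0:ℝ) 0 = {0} by simp, nhdsWithin_singleton]
    exact tendsto_pure_nhds (fun u => R (t + u) (s - u) z) 0
  obtain ⟨M, hMc, hMm, hM1, hMb⟩ := hR.2.2.2
  have hlaw : ∀ u : ℝ, 0 ≤ u → u ≤ h →
      R (t + u) (s - u) z = R (t + h) (s - h) (R (t + u) (h - u) z) := by
    intro u hu1 hu2
    have := hR.2.1 (t + u) (s - h) (h - u) (by linarith) (by linarith) (by linarith)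
    rw [show s - h + (h - u) = s - u by ring, show t + u + (h - u) = t + h by ring] at this
    rw [this, ContinuousLinearMap.comp_apply]
  -- the inner vector tends to z
  have hin : Tendsto (fun u => R (t + u) (h - u) z) (𝓝[Icc 0 h] h) (𝓝 z) := by
    have hmap : Tendsto (fun u : ℝ => h - u) (𝓝[Icc 0 h] h) (𝓝[Ici 0] 0) := by
      rw [tendsto_nhdsWithin_iff]
      constructor
      · have h1 : Tendsto (fun u : ℝ => h - u) (𝓝 h) (𝓝 (h - h)) :=
          (continuous_const.sub continuous_id).tendsto h
        rw [sub_self] at h1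
        exact h1.mono_left nhdsWithin_le_nhds
      · filter_upwards [self_mem_nhdsWithin] with u hu
        exact sub_nonneg.2 hu.2
    have hback := qsg_tendsto_back' hR hA hz (show (0:ℝ) < t + h by linarith)
    have := hback.comp hmap
    apply this.congr
    intro u
    simp only [Function.comp_apply]
    rw [show t + h - (h - u) = t + u by ring]
  rw [← tendsto_sub_nhds_zero_iff]
  refine squeeze_zero_norm'
    (a := fun u => M (t + s) * ‖R (t + u) (h - u) z - z‖) ?_ ?_
  · filter_upwards [self_mem_nhdsWithin] with u hu
    obtain ⟨hu1, hu2⟩ := hu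
    rw [hlaw u hu1 hu2, ← map_sub]
    calc ‖(R (t + h) (s - h)) (R (t + u) (h - u) z - z)‖
        ≤ ‖R (t + h) (s - h)‖ * ‖R (t + u) (h - u) z - z‖ := ContinuousLinearMap.le_opNorm _ _
      _ ≤ M (t + s) * ‖R (t + u) (h - u) z - z‖ := by
          apply mul_le_mul_of_nonneg_right _ (norm_nonneg _)
          have := hMb (t + h) (s - h) (by linarith) (by linarith)
          rwa [show t + h + (s - h) = t + s by ring] at this
  · have h4 : Tendsto (fun u => M (t + s) * ‖R (t + u) (h - u) z - z‖) (𝓝[Icc 0 h] h)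
        (𝓝 (M (t + s) * ‖z - (z : X)‖)) :=
      tendsto_const_nhds.mul ((hin.sub (tendsto_const_nhds (x := z))).norm)
    simpa using h4

/-- Continuity on `[0,s]` of `u ↦ R (t+u) (s-u) z` for `z ∈ D`. -/
lemma qsg_continuousOn (hR : IsQuasiSemigroup R) (hA : IsGenerator R A D)
    {t s : ℝ} (ht : 0 ≤ t) {z : X} (hz : z ∈ D) :
    ContinuousOn (fun u => R (t + u) (s - u) z) (Icc 0 s) := by
  intro h hh
  have hsplit : Icc (0:ℝ) s = Icc 0 h ∪ Icc h s := (Icc_union_Icc_eq_Icc hh.1 hh.2).symm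
  rw [ContinuousWithinAt, hsplit, nhdsWithin_union, tendsto_sup]
  exact ⟨qsg_tendsto_left hR hA ht hh.1 hh.2 hz, qsg_tendsto_right hR ht hh.1 hh.2 z⟩

end Aux2

section Aux3

variable [NormedAddCommGroup X] [NormedSpace ℂ X]
variable {R : ℝ → ℝ → X →L[ℂ] X} {A : ℝ → X → X} {D : Set X}

/-- Right derivative of `u ↦ R (t+u) (s-u) z` for `z ∈ D`. -/
lemma qsg_hasDerivWithinAt (hR : IsQuasiSemigroup R) (hA : IsGenerator R A D)
    (hconst : ∀ t h : ℝ, 0 ≤ t → 0 ≤ h → A (t + h) = A t)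
    {t s h : ℝ} (ht : 0 ≤ t) (h0 : 0 ≤ h) (hhs : h < s) {z : X} (hz : z ∈ D) :
    HasDerivWithinAt (fun u => R (t + u) (s - u) z)
      (-(R (t + h) (s - h) (A t z))) (Ici h) h := by
  obtain ⟨M, hMc, hMm, hM1, hMb⟩ := hR.2.2.2
  rw [hasDerivWithinAt_iff_tendsto_slope, Ici_sdiff_left]
  -- the difference quotient of the generator limit
  have hw : Tendsto (fun u : ℝ => (u - h)⁻¹ • (R (t + h) (u - h) z - z)) (𝓝[Ioi h] h)
      (𝓝 (A t z)) := by
    have hgen : GenLimit R (t + h) z (A (t + h) z) := hA.2 (t + h) (by linarith) z hz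
    rw [hconst t h ht h0] at hgen
    have hmap : Tendsto (fun u : ℝ => u - h) (𝓝[Ioi h] h) (𝓝[Ioi 0] 0) := by
      rw [tendsto_nhdsWithin_iff]
      constructor
      · have h1 : Tendsto (fun u : ℝ => u - h) (𝓝 h) (𝓝 (h - h)) :=
          (continuous_id.sub continuous_const).tendsto h
        rw [sub_self] at h1
        exact h1.mono_left nhdsWithin_le_nhds
      · filter_upwards [self_mem_nhdsWithin] with u hu
        exact sub_pos.2 (mem_Ioi.1 hu)
    exact hgen.comp hmap
  -- filter facts
  have hIio : Iio s ∈ 𝓝[Ioi h] h := mem_nhdsWithin_of_mem_nhds (Iio_mem_nhds hhs)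
  have hfle : 𝓝[Ioi h] h ≤ 𝓝[Icc h s] h := by
    rw [← nhdsWithin_inter_of_mem' hIio]
    exact nhdsWithin_mono _ (fun u hu => ⟨le_of_lt hu.1, le_of_lt hu.2⟩)
  -- second term
  have hterm2 : Tendsto (fun u => R (t + u) (s - u) (A t z)) (𝓝[Ioi h] h)
      (𝓝 (R (t + h) (s - h) (A t z))) :=
    (qsg_tendsto_right hR ht h0 (le_of_lt hhs) (A t z)).mono_left hfle
  -- first term
  have hterm1 : Tendsto (fun u => R (t + u) (s - u)
      ((u - h)⁻¹ • (R (t + h) (u - h) z - z) - A t z)) (𝓝[Ioi h] h) (𝓝 0) := by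
    refine squeeze_zero_norm'
      (a := fun u => M (t + s) * ‖(u - h)⁻¹ • (R (t + h) (u - h) z - z) - A t z‖) ?_ ?_
    · filter_upwards [self_mem_nhdsWithin, hIio] with u hu1 hu2
      calc ‖(R (t + u) (s - u)) ((u - h)⁻¹ • (R (t + h) (u - h) z - z) - A t z)‖
          ≤ ‖R (t + u) (s - u)‖ * ‖(u - h)⁻¹ • (R (t + h) (u - h) z - z) - A t z‖ :=
            ContinuousLinearMap.le_opNorm _ _
        _ ≤ M (t + s) * ‖(u - h)⁻¹ • (R (t + h) (u - h) z - z) - A t z‖ := by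
            apply mul_le_mul_of_nonneg_right _ (norm_nonneg _)
            have hu1' : h < u := hu1
            have hu2' : u < s := hu2
            have := hMb (t + u) (s - u) (by linarith) (by linarith)
            rwa [show t + u + (s - u) = t + s by ring] at this
    · have h4 : Tendsto (fun u => M (t + s) * ‖(u - h)⁻¹ • (R (t + h) (u - h) z - z) - A t z‖)
          (𝓝[Ioi h] h) (𝓝 (M (t + s) * ‖A t z - A t z‖)) :=
        tendsto_const_nhds.mul ((hw.sub tendsto_const_nhds).norm)
      simpa using h4
  -- combine
  have hG : Tendsto (fun u => R (t + u) (s - u) ((u - h)⁻¹ • (R (t + h) (u - h) z - z)))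
      (𝓝[Ioi h] h) (𝓝 (R (t + h) (s - h) (A t z))) := by
    have := hterm1.add hterm2
    rw [zero_add] at this
    apply this.congr
    intro u
    rw [← map_add, sub_add_cancel]
  -- identify the slope
  refine hG.neg.congr' ?_
  filter_upwards [self_mem_nhdsWithin, hIio] with u hu1 hu2
  have hu1' : h < u := hu1
  have hu2' : u < s := hu2
  have hl := qsg_law hR ht h0 (le_of_lt hu1') (le_of_lt hu2') z
  simp only [slope_def_module]
  rw [hl, ← map_sub, show z - (R (t + h)) (u - h) z = -((R (t + h)) (u - h) z - z) from
    (neg_sub _ _).symm, map_neg, smul_neg, ← (R (t + u) (s - u)).map_smul_of_tower]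

end Aux3

section Aux4

variable [NormedAddCommGroup X] [NormedSpace ℂ X]
variable {R : ℝ → ℝ → X →L[ℂ] X} {A : ℝ → X → X} {D : Set X}

lemma qsg_hasDerivWithinAt_exp (hR : IsQuasiSemigroup R) (hA : IsGenerator R A D)
    (hconst : ∀ t h : ℝ, 0 ≤ t → 0 ≤ h → A (t + h) = A t) {lam : ℂ}
    {t s h : ℝ} (ht : 0 ≤ t) (h0 : 0 ≤ h) (hhs : h < s) {z : X} (hz : z ∈ D) :
    HasDerivWithinAt (fun u : ℝ => Complex.exp (lam * u) • R (t + u) (s - u) z)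
      (Complex.exp (lam * h) • R (t + h) (s - h) (lam • z - A t z)) (Ici h) h := by
  have hq := qsg_hasDerivWithinAt hR hA hconst ht h0 hhs hz
  have h1 : HasDerivAt (fun u : ℝ => (u : ℂ)) 1 h := by
    exact Complex.ofRealCLM.hasDerivAt (x := h)
  have hc : HasDerivWithinAt (fun u : ℝ => Complex.exp (lam * u))
      (Complex.exp (lam * h) * (lam * 1)) (Ici h) h :=
    ((h1.const_mul lam).cexp).hasDerivWithinAt
  have hd := hc.smul hq
  convert hd using 1
  · rfl
  rw [map_sub, (R (t + h) (s - h)).map_smul, smul_sub, smul_smul, mul_one, smul_neg, sub_eq_add_neg, add_comm]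

end Aux4

/-- Kernel inclusion: `N[(λ - A(t))^n] ⊆ N[(e^{λs} - R(t,s))^n]`. -/
theorem quasiSemigroup_kernel_inclusion
    [NormedAddCommGroup X] [NormedSpace ℂ X] [CompleteSpace X]
    (R : ℝ → ℝ → X →L[ℂ] X) (hR : IsQuasiSemigroup R)
    (A : ℝ → X → X) (D : Set X) (hA : IsGenerator R A D)
    (hconst : ∀ t h : ℝ, 0 ≤ t → 0 ≤ h → A (t + h) = A t)
    (lam : ℂ) (t s : ℝ) (ht : 0 ≤ t) (hs : 0 ≤ s) (n : ℕ) (x : X)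
    (hxD : ∀ k : ℕ, k < n → (fun y : X => lam • y - A t y)^[k] x ∈ D)
    (hker : (fun y : X => lam • y - A t y)^[n] x = 0) :
    (fun y : X => Complex.exp (lam * (s : ℂ)) • y - R t s y)^[n] x = 0 := by
  classical
  set xs : ℕ → X := fun k => (fun y : X => lam • y - A t y)^[k] x with hxsdef
  have hxs_succ : ∀ k, xs (k + 1) = lam • xs k - A t (xs k) := by
    intro k
    rw [hxsdef]
    simp only [Function.iterate_succ_apply']
  have hxsn : xs n = 0 := by rw [hxsdef]; exact hker
  have hxD' : ∀ k, k < n → xs k ∈ D := fun k hk => by rw [hxsdef]; exact hxD k hk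
  -- the key formula, by downward induction along the chain
  have key : ∀ m : ℕ, ∀ h ∈ Icc (0:ℝ) s,
      R (t + h) (s - h) (xs (n - m)) =
      ∑ j ∈ Finset.range (n - (n - m)),
        ((((h:ℝ):ℂ) - (s:ℂ)) ^ j / (j.factorial : ℂ) *
          Complex.exp (lam * ((s:ℂ) - ((h:ℝ):ℂ)))) • xs (n - m + j) := by
    intro m
    induction m with
    | zero =>
      intro h hh
      simp [hxsn]
    | succ m IH =>
      by_cases hnm : n ≤ m
      · have e1 : n - (m + 1) = n - m := by omega
        rw [e1]; exact IH
      push_neg at hnm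
      have hkn : n - (m + 1) < n := by omega
      have hk1 : n - (m + 1) + 1 = n - m := by omega
      set k := n - (m + 1) with hkdef
      have hterms : n - k = m + 1 := by omega
      have hzD : xs k ∈ D := hxD' k hkn
      -- rewrite IH in terms of k
      rw [← hk1] at IH
      have hterms' : n - (k + 1) = m := by omega
      rw [hterms'] at IH
      -- the auxiliary function
      set g : ℝ → X := fun h => Complex.exp (lam * h) • R (t + h) (s - h) (xs k) -
        ∑ j ∈ Finset.range (n - k),
          ((((h:ℝ):ℂ) - (s:ℂ)) ^ j / (j.factorial : ℂ) * Complex.exp (lam * (s:ℂ))) •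
            xs (k + j) with hg
      have hgc : ContinuousOn g (Icc 0 s) := by
        apply ContinuousOn.sub
        · apply ContinuousOn.smul _ (qsg_continuousOn hR hA ht hzD)
          apply Continuous.continuousOn
          exact Complex.continuous_exp.comp (continuous_const.mul Complex.continuous_ofReal)
        · apply Continuous.continuousOn
          apply continuous_finset_sum
          intro j _
          apply Continuous.smul _ continuous_const
          apply Continuous.mul _ continuous_const
          apply Continuous.div_const
          exact (Complex.continuous_ofReal.sub continuous_const).pow j
      have hderiv : ∀ h ∈ Ico (0:ℝ) s, HasDerivWithinAt g 0 (Ici h) h := by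
        intro h hh
        have hd1 := qsg_hasDerivWithinAt_exp hR hA hconst (lam := lam) ht hh.1 hh.2 hzD
        rw [← hxs_succ k] at hd1
        have hd2 : HasDerivAt (fun u : ℝ => ∑ j ∈ Finset.range (n - k),
            ((((u:ℝ):ℂ) - (s:ℂ)) ^ j / (j.factorial : ℂ) * Complex.exp (lam * (s:ℂ))) •
              xs (k + j))
            (∑ j ∈ Finset.range (n - k),
              ((j : ℂ) * (((h:ℝ):ℂ) - (s:ℂ)) ^ (j - 1) * 1 / (j.factorial : ℂ) *
                Complex.exp (lam * (s:ℂ))) • xs (k + j)) h := by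
          apply HasDerivAt.fun_sum
          intro j _
          have hb : HasDerivAt (fun u : ℝ => ((u:ℂ) - (s:ℂ))) 1 h := by
            simpa using (Complex.ofRealCLM.hasDerivAt (x := h)).sub_const (s:ℂ)
          have hpow : HasDerivAt (fun u : ℝ => ((u:ℂ) - (s:ℂ)) ^ j)
              ((j:ℂ) * (((h:ℝ):ℂ) - (s:ℂ)) ^ (j - 1) * 1) h :=
            (hasDerivAt_pow j (((h:ℝ):ℂ) - (s:ℂ))).comp h hb
          exact ((hpow.div_const _).mul_const _).smul_const _
        have hd := hd1.sub hd2.hasDerivWithinAt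
        have hval : Complex.exp (lam * h) • R (t + h) (s - h) (xs (k + 1)) -
            (∑ j ∈ Finset.range (n - k),
              ((j : ℂ) * (((h:ℝ):ℂ) - (s:ℂ)) ^ (j - 1) * 1 / (j.factorial : ℂ) *
                Complex.exp (lam * (s:ℂ))) • xs (k + j)) = 0 := by
          rw [IH h ⟨hh.1, le_of_lt hh.2⟩]
          rw [hterms, Finset.sum_range_succ']
          rw [Finset.smul_sum]
          simp only [Nat.cast_zero, zero_mul, zero_div, zero_smul, add_zero, Nat.add_sub_cancel]
          rw [sub_eq_zero]
          apply Finset.sum_congr rfl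
          intro j hj
          rw [smul_smul, show k + 1 + j = k + (j + 1) from by omega]
          congr 1
          have he2 : Complex.exp (lam * ((s:ℂ) - ((h:ℝ):ℂ))) =
              Complex.exp (lam * (s:ℂ)) * (Complex.exp (lam * ((h:ℝ):ℂ)))⁻¹ := by
            rw [mul_sub, Complex.exp_sub, div_eq_mul_inv]
          have hf0 : ((j.factorial : ℕ) : ℂ) ≠ 0 :=
            Nat.cast_ne_zero.2 (Nat.factorial_ne_zero j)
          have hne : ((j + 1 : ℕ) : ℂ) ≠ 0 := Nat.cast_ne_zero.2 (Nat.succ_ne_zero j)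
          have hfac : (((j + 1).factorial : ℕ) : ℂ)
              = ((j + 1 : ℕ) : ℂ) * ((j.factorial : ℕ) : ℂ) := by
            rw [Nat.factorial_succ]; push_cast; ring
          rw [he2, mul_one, hfac, mul_div_mul_left _ _ hne]
          have hcancel : Complex.exp (lam * ((h:ℝ):ℂ)) * (Complex.exp (lam * ((h:ℝ):ℂ)))⁻¹ = 1 :=
            mul_inv_cancel₀ (Complex.exp_ne_zero _)
          calc Complex.exp (lam * ((h:ℝ):ℂ)) * ((((h:ℝ):ℂ) - (s:ℂ)) ^ j / ((j.factorial : ℕ) : ℂ)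
                * (Complex.exp (lam * (s:ℂ)) * (Complex.exp (lam * ((h:ℝ):ℂ)))⁻¹))
              = (((h:ℝ):ℂ) - (s:ℂ)) ^ j / ((j.factorial : ℕ) : ℂ) * Complex.exp (lam * (s:ℂ))
                * (Complex.exp (lam * ((h:ℝ):ℂ)) * (Complex.exp (lam * ((h:ℝ):ℂ)))⁻¹) := by ring
            _ = (((h:ℝ):ℂ) - (s:ℂ)) ^ j / ((j.factorial : ℕ) : ℂ)
                * Complex.exp (lam * (s:ℂ)) := by rw [hcancel, mul_one]
        rw [hval] at hd
        exact hd
      -- conclude that g is constant, and compute g s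
      have hgs : g s = 0 := by
        rw [hg]
        simp only
        have h1 : R (t + s) (s - s) (xs k) = xs k := by
          rw [sub_self, hR.1 (t + s) (by linarith)]; rfl
        rw [h1]
        rw [Finset.sum_eq_single 0]
        · simp
        · intro j hj hj0
          simp [sub_self, zero_pow hj0]
        · intro hmem
          exact absurd (Finset.mem_range.2 (by omega)) hmem
      have hconst_g := constant_of_has_deriv_right_zero hgc hderiv
      have h00 : g 0 = 0 := (hconst_g s ⟨hs, le_rfl⟩).symm.trans hgs
      intro h hh
      have hgh : g h = 0 := (hconst_g h hh).trans h00
      rw [hg] at hgh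
      simp only at hgh
      have h2 := sub_eq_zero.1 hgh
      have h3 := congrArg (fun v => (Complex.exp (lam * (h:ℂ)))⁻¹ • v) h2
      simp only [inv_smul_smul₀ (Complex.exp_ne_zero _)] at h3
      rw [hterms] at h3 ⊢
      rw [h3, Finset.smul_sum]
      apply Finset.sum_congr rfl
      intro j hj
      rw [smul_smul]
      congr 1
      have he2 : Complex.exp (lam * ((s:ℂ) - ((h:ℝ):ℂ))) =
          Complex.exp (lam * (s:ℂ)) * (Complex.exp (lam * ((h:ℝ):ℂ)))⁻¹ := by
        rw [mul_sub, Complex.exp_sub, div_eq_mul_inv]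
      rw [he2]
      ring
  -- specialize to h = 0
  have formula : ∀ k, k ≤ n → R t s (xs k) =
      ∑ j ∈ Finset.range (n - k),
        ((((0:ℝ):ℂ) - (s:ℂ)) ^ j / (j.factorial : ℂ) *
          Complex.exp (lam * ((s:ℂ) - ((0:ℝ):ℂ)))) • xs (k + j) := by
    intro k hk
    have hkey := key (n - k) 0 ⟨le_rfl, hs⟩
    rw [show n - (n - k) = k from by omega] at hkey
    rw [add_zero, sub_zero] at hkey
    exact hkey
  -- the subspaces spanned by tails of the chain
  set S : ℕ → Submodule ℂ X := fun m => Submodule.span ℂ (xs '' {i | m ≤ i ∧ i < n}) with hS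
  have hSmono : ∀ m m' : ℕ, m ≤ m' → S m' ≤ S m := by
    intro m m' hmm'
    apply Submodule.span_mono
    apply Set.image_mono
    intro i hi
    exact ⟨le_trans hmm' hi.1, hi.2⟩
  set E : X → X := fun y : X => Complex.exp (lam * (s : ℂ)) • y - R t s y with hE
  have claim1 : ∀ k, k < n → E (xs k) ∈ S (k + 1) := by
    intro k hkn
    have heq : E (xs k) = -∑ j ∈ Finset.range (n - k - 1),
        ((((0:ℝ):ℂ) - (s:ℂ)) ^ (j + 1) / ((j + 1).factorial : ℂ) *
          Complex.exp (lam * ((s:ℂ) - ((0:ℝ):ℂ)))) • xs (k + (j + 1)) := by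
      rw [hE]
      simp only
      rw [formula k (le_of_lt hkn), show n - k = (n - k - 1) + 1 from by omega,
        Finset.sum_range_succ']
      have hzero : ((((0:ℝ):ℂ) - (s:ℂ)) ^ 0 / ((Nat.factorial 0 : ℕ) : ℂ) *
          Complex.exp (lam * ((s:ℂ) - ((0:ℝ):ℂ)))) • xs (k + 0)
          = Complex.exp (lam * (s:ℂ)) • xs k := by
        norm_num
      rw [hzero]
      abel
    rw [heq]
    apply Submodule.neg_mem
    apply Submodule.sum_mem
    intro j hj
    apply Submodule.smul_mem
    apply Submodule.subset_span
    refine ⟨k + (j + 1), ⟨by omega, ?_⟩, rfl⟩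
    have := Finset.mem_range.1 hj
    omega
  have claim2 : ∀ m, ∀ y ∈ S m, E y ∈ S (m + 1) := by
    intro m y hy
    have hlin : ∀ y : X, E y =
        (Complex.exp (lam * (s : ℂ)) • ContinuousLinearMap.id ℂ X - R t s) y := by
      intro y
      simp [hE, ContinuousLinearMap.sub_apply, ContinuousLinearMap.smul_apply]
    induction hy using Submodule.span_induction with
    | mem y' hy' =>
      obtain ⟨i, ⟨hi1, hi2⟩, rfl⟩ := hy'
      exact hSmono (m + 1) (i + 1) (by omega) (claim1 i hi2)
    | zero =>
      have : E 0 = 0 := by rw [hlin 0, map_zero]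
      rw [this]; exact Submodule.zero_mem _
    | add y1 y2 h1 h2 ih1 ih2 =>
      have : E (y1 + y2) = E y1 + E y2 := by rw [hlin, hlin, hlin, map_add]
      rw [this]; exact Submodule.add_mem _ ih1 ih2
    | smul a y1 h1 ih1 =>
      have : E (a • y1) = a • E y1 := by
        rw [hlin, hlin]
        exact (Complex.exp (lam * (s : ℂ)) • ContinuousLinearMap.id ℂ X - R t s).map_smul a y1
      rw [this]; exact Submodule.smul_mem _ _ ih1
  have hiter : ∀ m : ℕ, E^[m] x ∈ S m := by
    intro m
    induction m with
    | zero =>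
      simp only [Function.iterate_zero_apply]
      rcases Nat.eq_zero_or_pos n with hn0 | hn0
      · have hx0 : x = 0 := by
          have := hxsn
          rw [hn0] at this
          exact this
        rw [hx0]; exact Submodule.zero_mem _
      · apply Submodule.subset_span
        exact ⟨0, ⟨le_rfl, hn0⟩, rfl⟩
    | succ m IH =>
      rw [Function.iterate_succ_apply']
      exact claim2 m _ IH
  have hfin := hiter n
  have hSn : S n = ⊥ := by
    rw [hS]
    simp only
    have : {i : ℕ | n ≤ i ∧ i < n} = ∅ := by
      ext i; simp
    rw [this, Set.image_empty, Submodule.span_empty]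
  rw [hSn] at hfin
  exact Submodule.mem_bot ℂ |>.1 hfin
end

section
/- Let A(t) be the generator of a C_0-quasi-semigroup {R(t,s)} on a Banach space X with A(t+h)=A(t) for all t,h ≥ 0. Then e^{σ_p(A(t)) s} ⊆ σ_p(R(t,s)) for all s ≥ 0: if λ is an eigenvalue of A(t) with eigenvector x, then e^{λs} is an eigenvalue of R(t,s) with the same eigenvector x. -/
open Filter Topology MeasureTheory Set

variable {X : Type*}

/-- Point spectral inclusion: an eigenvector of `A(t)` for `λ` is an eigenvector of
`R(t,s)` for `e^{λs}`. -/
theorem quasiSemigroup_point_spectral_inclusion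
    [NormedAddCommGroup X] [NormedSpace ℂ X] [CompleteSpace X]
    (R : ℝ → ℝ → X →L[ℂ] X) (hR : IsQuasiSemigroup R)
    (A : ℝ → X → X) (D : Set X) (hA : IsGenerator R A D)
    (hconst : ∀ t h : ℝ, 0 ≤ t → 0 ≤ h → A (t + h) = A t)
    (lam : ℂ) (t s : ℝ) (ht : 0 ≤ t) (hs : 0 ≤ s)
    (x : X) (hx : x ∈ D) (hx0 : x ≠ 0) (heig : A t x = lam • x) :
    R t s x = Complex.exp (lam * (s : ℂ)) • x := by

  obtain ⟨hR0, hRcomp, hRcont, M, hMcont, hMmono, hM1, hMbound⟩ := hR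
  obtain ⟨hD, hGen⟩ := hA
  -- The key auxiliary function
  set g : ℝ → X := fun r => R (t + r) (s - r) (Complex.exp (lam * (r : ℂ)) • x) with hgdef
  -- bound on the operators
  have hbound : ∀ a b : ℝ, 0 ≤ a → 0 ≤ b → a + b = t + s → ∀ z : X,
      ‖R a b z‖ ≤ M (t + s) * ‖z‖ := by
    intro a b ha hb hab z
    refine ((R a b).le_opNorm z).trans ?_
    have h1 : ‖R a b‖ ≤ M (t + s) := by
      have := hMbound a b ha hb
      rwa [hab] at this
    exact mul_le_mul_of_nonneg_right h1 (norm_nonneg z)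
  -- derivative of the exponential slope
  have hexp : Tendsto (fun h : ℝ => h⁻¹ • (Complex.exp (lam * (h : ℂ)) - 1)) (𝓝[>] (0:ℝ))
      (𝓝 lam) := by
    have hd : HasDerivAt (fun h : ℝ => Complex.exp (lam * (h : ℂ))) lam 0 := by
      have h1 : HasDerivAt (fun h : ℝ => lam * (h : ℂ)) lam 0 := by
        simpa using (Complex.ofRealCLM.hasDerivAt (x := (0:ℝ))).const_mul lam
      simpa using h1.cexp
    have h2 := hasDerivAt_iff_tendsto_slope.1 hd
    refine (h2.mono_left (nhdsWithin_mono _ ?_)).congr fun h => ?_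
    · exact fun y hy => Set.mem_compl_singleton_iff.2 (ne_of_gt hy)
    · simp [slope_def_module]
  -- right decomposition
  have decompR : ∀ r h : ℝ, 0 ≤ r → 0 ≤ h → r + h ≤ s →
      g (r + h) - g r = Complex.exp (lam * (r : ℂ)) •
        R (t + r + h) (s - r - h)
          ((Complex.exp (lam * (h : ℂ)) - 1) • x - (R (t + r) h x - x)) := by
    intro r h hr hh hrh
    have hcomp := hRcomp (t + r) (s - r - h) h (by linarith) (by linarith) hh
    have e1 : s - r - h + h = s - r := by ring
    rw [e1] at hcomp
    have hg1 : g r = R (t + r + h) (s - r - h)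
        (R (t + r) h (Complex.exp (lam * (r : ℂ)) • x)) := by
      simp only [hgdef]
      rw [hcomp]
      rfl
    have e2 : t + (r + h) = t + r + h := by ring
    have e3 : s - (r + h) = s - r - h := by ring
    have hg2 : g (r + h) = R (t + r + h) (s - r - h)
        (Complex.exp (lam * ((r : ℂ) + (h : ℂ))) • x) := by
      simp only [hgdef]
      rw [e2, e3]
      norm_num
    rw [hg1, hg2, ← map_sub, ← ContinuousLinearMap.map_smul]
    congr 1
    rw [ContinuousLinearMap.map_smul]
    rw [show lam * ((r : ℂ) + (h : ℂ)) = lam * (r : ℂ) + lam * (h : ℂ) by ring, Complex.exp_add]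
    module
  -- left decomposition
  have decompL : ∀ y r : ℝ, 0 ≤ y → y ≤ r → r ≤ s →
      g r - g y = R (t + r) (s - r) (Complex.exp (lam * (y : ℂ)) •
        ((Complex.exp (lam * (((r - y : ℝ)) : ℂ)) - 1) • x - (R (t + y) (r - y) x - x))) := by
    intro y r hy hyr hrs
    have hcomp := hRcomp (t + y) (s - r) (r - y) (by linarith) (by linarith) (by linarith)
    have e1 : s - r + (r - y) = s - y := by ring
    have e2 : t + y + (r - y) = t + r := by ring
    rw [e1, e2] at hcomp
    have hg1 : g y = R (t + r) (s - r)
        (R (t + y) (r - y) (Complex.exp (lam * (y : ℂ)) • x)) := by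
      simp only [hgdef]
      rw [hcomp]
      rfl
    rw [hg1]
    simp only [hgdef]
    rw [← map_sub]
    congr 1
    rw [ContinuousLinearMap.map_smul]
    rw [show lam * (r : ℂ) = lam * (y : ℂ) + lam * (((r - y : ℝ)) : ℂ) by push_cast; ring,
      Complex.exp_add]
    module
  -- the right derivative of g is zero on [0, s)
  have hderiv : ∀ r ∈ Ico (0:ℝ) s, HasDerivWithinAt g 0 (Ici r) r := by
    intro r hr
    obtain ⟨hr0, hrs⟩ := hr
    have htr : (0:ℝ) ≤ t + r := by linarith
    have tendA : Tendsto (fun h : ℝ => h⁻¹ • ((Complex.exp (lam * (h : ℂ)) - 1) • x))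
        (𝓝[>] (0:ℝ)) (𝓝 (lam • x)) := by
      refine (hexp.smul_const x).congr fun h => ?_
      rw [smul_assoc]
    have tendB : Tendsto (fun h : ℝ => h⁻¹ • (R (t + r) h x - x)) (𝓝[>] (0:ℝ))
        (𝓝 (lam • x)) := by
      have h2 : A (t + r) x = lam • x := by rw [hconst t r ht hr0, heig]
      have h3 : GenLimit R (t + r) x (A (t + r) x) := hGen (t + r) htr x hx
      rw [h2] at h3
      exact h3
    have hF : Tendsto (fun h : ℝ => h⁻¹ • ((Complex.exp (lam * (h : ℂ)) - 1) • x)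
        - h⁻¹ • (R (t + r) h x - x)) (𝓝[>] (0:ℝ)) (𝓝 0) := by
      simpa using tendA.sub tendB
    have hmap : Tendsto (fun y : ℝ => y - r) (𝓝[>] r) (𝓝[>] (0:ℝ)) := by
      apply tendsto_nhdsWithin_of_tendsto_nhds_of_eventually_within
      · have h4 : Tendsto (fun y : ℝ => y - r) (𝓝 r) (𝓝 (r - r)) :=
          (continuous_id.sub continuous_const).tendsto r
        rw [sub_self] at h4
        exact h4.mono_left nhdsWithin_le_nhds
      · exact eventually_mem_nhdsWithin.mono fun y hy => mem_Ioi.2 (sub_pos.2 hy)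
    rw [hasDerivWithinAt_iff_tendsto_slope, Ici_sdiff_left]
    apply squeeze_zero_norm' (a := fun y : ℝ => (‖Complex.exp (lam * (r : ℂ))‖ * M (t + s)) *
      ‖(y - r)⁻¹ • ((Complex.exp (lam * (((y - r : ℝ)) : ℂ)) - 1) • x)
        - (y - r)⁻¹ • (R (t + r) (y - r) x - x)‖)
    · filter_upwards [Ioo_mem_nhdsGT_of_mem ⟨le_refl r, hrs⟩] with y hy
      obtain ⟨hy1, hy2⟩ := hy
      have hhpos : 0 < y - r := sub_pos.2 hy1
      have hdec := decompR r (y - r) hr0 (le_of_lt hhpos) (by linarith)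
      rw [show r + (y - r) = y by ring] at hdec
      have hWeq : (y - r)⁻¹ • ((Complex.exp (lam * (((y - r : ℝ)) : ℂ)) - 1) • x)
          - (y - r)⁻¹ • (R (t + r) (y - r) x - x)
          = (y - r)⁻¹ • ((Complex.exp (lam * (((y - r : ℝ)) : ℂ)) - 1) • x
              - (R (t + r) (y - r) x - x)) := (smul_sub _ _ _).symm
      rw [hWeq]
      set W : X := (Complex.exp (lam * (((y - r : ℝ)) : ℂ)) - 1) • x
          - (R (t + r) (y - r) x - x) with hWdef
      have hRb : ‖R (t + r + (y - r)) (s - r - (y - r)) W‖ ≤ M (t + s) * ‖W‖ :=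
        hbound _ _ (by linarith) (by linarith) (by ring) W
      calc ‖slope g r y‖
          = ‖(y - r)⁻¹‖ * (‖Complex.exp (lam * (r : ℂ))‖ *
              ‖R (t + r + (y - r)) (s - r - (y - r)) W‖) := by
            rw [slope_def_module g r y, hdec, norm_smul, norm_smul]
        _ ≤ ‖(y - r)⁻¹‖ * (‖Complex.exp (lam * (r : ℂ))‖ * (M (t + s) * ‖W‖)) := by gcongr
        _ = (‖Complex.exp (lam * (r : ℂ))‖ * M (t + s)) * (‖(y - r)⁻¹‖ * ‖W‖) := by ring
        _ = (‖Complex.exp (lam * (r : ℂ))‖ * M (t + s)) * ‖(y - r)⁻¹ • W‖ := by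
            rw [norm_smul]
    · have h5 := (hF.comp hmap).norm
      have h6 := h5.const_mul (‖Complex.exp (lam * (r : ℂ))‖ * M (t + s))
      simpa [Function.comp] using h6
  -- continuity of g on [0, s]
  have hcont : ContinuousOn g (Icc 0 s) := by
    intro r hr
    have hright : ContinuousWithinAt g (Icc r s) r := by
      rcases eq_or_lt_of_le hr.2 with heq | hlt
      · rw [heq, Icc_self]
        exact continuousWithinAt_singleton
      · exact ((hderiv r ⟨hr.1, hlt⟩).continuousWithinAt).mono Icc_subset_Ici_self
    have hleft : ContinuousWithinAt g (Icc 0 r) r := by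
      rcases eq_or_lt_of_le hr.1 with heq | hlt
      · rw [← heq, Icc_self]
        exact continuousWithinAt_singleton
      · -- 0 < r ≤ s
        obtain ⟨y0, -, hy0⟩ := ((hD x).1 hx).2 (t + r) (by linarith)
        have hy0' : Tendsto (fun h : ℝ => h⁻¹ • (R (t + r - h) h x - x)) (𝓝[>] (0:ℝ))
            (𝓝 y0) := hy0
        have hWlim : Tendsto (fun h : ℝ => R (t + r - h) h x - x) (𝓝[>] (0:ℝ)) (𝓝 0) := by
          have h1 : Tendsto (fun h : ℝ => h • (h⁻¹ • (R (t + r - h) h x - x)))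
              (𝓝[>] (0:ℝ)) (𝓝 ((0:ℝ) • y0)) :=
            (tendsto_id.mono_left nhdsWithin_le_nhds).smul hy0'
          rw [zero_smul] at h1
          refine h1.congr' ?_
          filter_upwards [self_mem_nhdsWithin] with h hh
          exact smul_inv_smul₀ (ne_of_gt hh) _
        have hmap2 : Tendsto (fun y : ℝ => r - y) (𝓝[Ico 0 r] r) (𝓝[>] (0:ℝ)) := by
          apply tendsto_nhdsWithin_of_tendsto_nhds_of_eventually_within
          · have h4 : Tendsto (fun y : ℝ => r - y) (𝓝 r) (𝓝 (r - r)) :=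
              (continuous_const.sub continuous_id).tendsto r
            rw [sub_self] at h4
            exact h4.mono_left nhdsWithin_le_nhds
          · exact eventually_mem_nhdsWithin.mono fun y hy => sub_pos.2 hy.2
        have hB : Tendsto (fun y : ℝ => R (t + y) (r - y) x - x) (𝓝[Ico 0 r] r) (𝓝 0) := by
          refine (hWlim.comp hmap2).congr fun y => ?_
          simp only [Function.comp]
          rw [show t + r - (r - y) = t + y by ring]
        have hA2 : Tendsto (fun y : ℝ => (Complex.exp (lam * (((r - y : ℝ)) : ℂ)) - 1) • x)
            (𝓝[Ico 0 r] r) (𝓝 0) := by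
          have hc : Continuous fun y : ℝ =>
              (Complex.exp (lam * (((r - y : ℝ)) : ℂ)) - 1) • x := by
            apply Continuous.smul _ continuous_const
            exact (Complex.continuous_exp.comp
              (continuous_const.mul (Complex.continuous_ofReal.comp
                (continuous_const.sub continuous_id)))).sub continuous_const
          have h4 := (hc.tendsto r).mono_left (nhdsWithin_le_nhds (s := Ico 0 r))
          simpa using h4
        have hexp2 : Tendsto (fun y : ℝ => Complex.exp (lam * (y : ℂ))) (𝓝[Ico 0 r] r)
            (𝓝 (Complex.exp (lam * (r : ℂ)))) := by
          have hc : Continuous fun y : ℝ => Complex.exp (lam * (y : ℂ)) :=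
            Complex.continuous_exp.comp (continuous_const.mul Complex.continuous_ofReal)
          exact (hc.tendsto r).mono_left nhdsWithin_le_nhds
        have hinner : Tendsto (fun y : ℝ => Complex.exp (lam * (y : ℂ)) •
            ((Complex.exp (lam * (((r - y : ℝ)) : ℂ)) - 1) • x - (R (t + y) (r - y) x - x)))
            (𝓝[Ico 0 r] r) (𝓝 0) := by
          have := hexp2.smul (hA2.sub hB)
          simpa using this
        have htendIco : Tendsto (fun y => g y - g r) (𝓝[Ico 0 r] r) (𝓝 0) := by
          apply squeeze_zero_norm' (a := fun y : ℝ => M (t + s) *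
            ‖Complex.exp (lam * (y : ℂ)) •
              ((Complex.exp (lam * (((r - y : ℝ)) : ℂ)) - 1) • x
                - (R (t + y) (r - y) x - x))‖)
          · filter_upwards [self_mem_nhdsWithin] with y hy
            have hdec := decompL y r hy.1 (le_of_lt hy.2) hr.2
            rw [show g y - g r = -(g r - g y) from (neg_sub _ _).symm, norm_neg, hdec]
            exact hbound _ _ (by linarith [hy.1, hr.2]) (by linarith [hr.2]) (by ring) _
          · simpa using hinner.norm.const_mul (M (t + s))
        have htend : Tendsto (fun y => g y - g r) (𝓝[Icc 0 r] r) (𝓝 0) := by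
          rw [show Icc (0:ℝ) r = Ico 0 r ∪ {r} from (Ico_union_right hr.1).symm,
            nhdsWithin_union, tendsto_sup]
          refine ⟨htendIco, ?_⟩
          rw [nhdsWithin_singleton]
          have h7 : Tendsto (fun y => g y - g r) (pure r) (𝓝 (g r - g r)) :=
            tendsto_pure_nhds _ r
          rw [sub_self] at h7
          exact h7
        have h8 := htend.add (tendsto_const_nhds (x := g r))
        have h9 : Tendsto g (𝓝[Icc 0 r] r) (𝓝 (g r)) := by
          simpa using h8
        exact h9
    have h10 := hleft.union hright
    rwa [Icc_union_Icc_eq_Icc hr.1 hr.2] at h10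
  -- conclude: g is constant on [0, s]
  have key := constant_of_has_deriv_right_zero hcont hderiv s (right_mem_Icc.2 hs)
  have hgs : g s = Complex.exp (lam * (s : ℂ)) • x := by
    simp only [hgdef, sub_self]
    rw [hR0 (t + s) (by linarith)]
    rfl
  have hg0 : g 0 = R t s x := by
    simp only [hgdef]
    norm_num
  rw [← hg0, ← key, hgs]
end

section
/- Let A(t) be the generator of a C_0-quasi-semigroup {R(t,s)} on a Banach space X with A(t+h)=A(t) for all t,h ≥ 0. Then e^{σ_a(A(t)) s} ⊆ σ_a(R(t,s)): if λ ∈ σ_a(A(t)) with approximate eigenvector (x_n) ⊂ D, ‖x_n‖ = 1, ‖(λ − A(t))x_n‖ → 0, then ‖(e^{λs} − R(t,s))x_n‖ → 0, so e^{λs} ∈ σ_a(R(t,s)). -/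
open Filter Topology MeasureTheory Set

variable {X : Type*}

theorem key_est [NormedAddCommGroup X] [NormedSpace ℂ X]
    (R : ℝ → ℝ → X →L[ℂ] X) (hR : IsQuasiSemigroup R)
    (A : ℝ → X → X) (D : Set X) (hA : IsGenerator R A D)
    (hconst : ∀ t h : ℝ, 0 ≤ t → 0 ≤ h → A (t + h) = A t)
    (lam : ℂ) (t s : ℝ) (ht : 0 ≤ t) (hs : 0 ≤ s)
    (M : ℝ → ℝ) (hM1 : ∀ u : ℝ, 0 ≤ u → 1 ≤ M u)
    (hMb : ∀ t s : ℝ, 0 ≤ t → 0 ≤ s → ‖R t s‖ ≤ M (t + s))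
    (x : X) (hx : x ∈ D) :
    ‖Complex.exp (lam * (s : ℂ)) • x - R t s x‖ ≤
      s * ((M (t + s) * Real.exp (|lam.re| * s)) * ‖lam • x - A t x‖) := by
  set K : ℝ := M (t + s) * Real.exp (|lam.re| * s) with hKdef
  set δ : ℝ := ‖lam • x - A t x‖ with hδdef
  have hts : (0:ℝ) ≤ t + s := by linarith
  have hMpos : (0:ℝ) < M (t + s) := lt_of_lt_of_le one_pos (hM1 _ hts)
  have hK0 : 0 < K := mul_pos hMpos (Real.exp_pos _)
  have hδ0 : 0 ≤ δ := norm_nonneg _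
  set ψ : ℝ → X := fun h => R (t + h) (s - h) x with hψdef
  set φ : ℝ → X := fun h => Complex.exp (lam * (h : ℂ)) • ψ h with hφdef
  have hφ0 : φ 0 = R t s x := by
    simp [hφdef, hψdef]
  have hφs : φ s = Complex.exp (lam * (s : ℂ)) • x := by
    have h1 : R (t + s) (0:ℝ) = 1 := hR.1 (t + s) hts
    simp [hφdef, hψdef, sub_self, h1]
  -- generator limit at shifted times
  have hgen : ∀ h : ℝ, 0 ≤ h →
      Tendsto (fun ε : ℝ => ε⁻¹ • (R (t + h) ε x - x)) (𝓝[>] (0:ℝ)) (𝓝 (A t x)) := by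
    intro h hh
    have := hA.2 (t + h) (by linarith) x hx
    rwa [hconst t h ht hh] at this
  -- exp slope
  have hexp : Tendsto (fun ε : ℝ => ε⁻¹ • (Complex.exp (lam * (ε:ℂ)) - 1)) (𝓝[>] (0:ℝ)) (𝓝 lam) := by
    have h1 : HasDerivAt (fun r : ℝ => Complex.exp (lam * r)) lam 0 := by
      have h0 : HasDerivAt (fun r : ℝ => lam * (r : ℂ)) lam 0 := by
        simpa using ((hasDerivAt_id (0:ℝ)).ofReal_comp.const_mul lam)
      simpa using h0.cexp
    have h3 : Tendsto (slope (fun r : ℝ => Complex.exp (lam * r)) 0) (𝓝[>] (0:ℝ)) (𝓝 lam) :=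
      (hasDerivAt_iff_tendsto_slope.1 h1).mono_left (nhdsWithin_mono _ fun z hz => ne_of_gt hz)
    exact h3.congr fun ε => by simp [slope_def_module]
  -- combined quotient limit
  have hquot : ∀ h : ℝ, 0 ≤ h →
      Tendsto (fun ε : ℝ => ε⁻¹ • (Complex.exp (lam * (ε:ℂ)) • x - R (t + h) ε x))
        (𝓝[>] (0:ℝ)) (𝓝 (lam • x - A t x)) := by
    intro h hh
    have h1 := (hexp.smul_const x).sub (hgen h hh)
    refine h1.congr fun ε => ?_
    simp only [smul_sub, sub_smul, one_smul, smul_assoc]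
    abel
  -- key identity
  have hid : ∀ h ε : ℝ, 0 ≤ h → 0 < ε → h + ε ≤ s →
      φ (h + ε) - φ h =
        Complex.exp (lam * (h:ℂ)) •
          (R (t + h + ε) (s - h - ε)) (Complex.exp (lam * (ε:ℂ)) • x - R (t + h) ε x) := by
    intro h ε hh hε hhs
    have hcomp := hR.2.1 (t + h) (s - h - ε) ε (by linarith) (by linarith) (le_of_lt hε)
    have e1 : s - h - ε + ε = s - h := by ring
    rw [e1] at hcomp
    have hψh : ψ h = (R (t + h + ε) (s - h - ε)) ((R (t + h) ε) x) := by
      simp [hψdef, hcomp]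
    have hψhe : ψ (h + ε) = (R (t + h + ε) (s - h - ε)) x := by
      have e2 : t + (h + ε) = t + h + ε := by ring
      have e3 : s - (h + ε) = s - h - ε := by ring
      simp [hψdef, e2, e3]
    have e4 : Complex.exp (lam * ((h + ε : ℝ) : ℂ)) =
        Complex.exp (lam * (h:ℂ)) * Complex.exp (lam * (ε:ℂ)) := by
      rw [← Complex.exp_add]; push_cast; ring_nf
    simp only [hφdef, hψh, hψhe, e4, map_sub, _root_.map_smul, smul_sub, mul_smul]
  -- norm bound from identity
  have hbound : ∀ h ε : ℝ, 0 ≤ h → 0 < ε → h + ε ≤ s →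
      ‖φ (h + ε) - φ h‖ ≤ K * ‖Complex.exp (lam * (ε:ℂ)) • x - R (t + h) ε x‖ := by
    intro h ε hh hε hhs
    rw [hid h ε hh hε hhs]
    rw [norm_smul]
    have hec : ‖Complex.exp (lam * (h:ℂ))‖ ≤ Real.exp (|lam.re| * s) := by
      rw [Complex.norm_exp]
      apply Real.exp_le_exp.2
      have : (lam * (h:ℂ)).re = lam.re * h := by simp [Complex.mul_re]
      rw [this]
      calc lam.re * h ≤ |lam.re| * h := mul_le_mul_of_nonneg_right (le_abs_self _) hh
        _ ≤ |lam.re| * s := mul_le_mul_of_nonneg_left (by linarith) (abs_nonneg _)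
    have hop : ‖(R (t + h + ε) (s - h - ε)) (Complex.exp (lam * (ε:ℂ)) • x - R (t + h) ε x)‖ ≤
        M (t + s) * ‖Complex.exp (lam * (ε:ℂ)) • x - R (t + h) ε x‖ := by
      refine le_trans ((R (t + h + ε) (s - h - ε)).le_opNorm _) ?_
      apply mul_le_mul_of_nonneg_right _ (norm_nonneg _)
      have := hMb (t + h + ε) (s - h - ε) (by linarith) (by linarith)
      have e5 : t + h + ε + (s - h - ε) = t + s := by ring
      rwa [e5] at this
    calc ‖Complex.exp (lam * (h:ℂ))‖ * ‖_‖ ≤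
        Real.exp (|lam.re| * s) * (M (t + s) * ‖Complex.exp (lam * (ε:ℂ)) • x - R (t + h) ε x‖) :=
          mul_le_mul hec hop (norm_nonneg _) (Real.exp_pos _).le
      _ = K * ‖Complex.exp (lam * (ε:ℂ)) • x - R (t + h) ε x‖ := by rw [hKdef]; ring
  -- identity for ψ (no exp factor)
  have hψid : ∀ h ε : ℝ, 0 ≤ h → 0 < ε → h + ε ≤ s →
      ψ (h + ε) - ψ h = (R (t + h + ε) (s - h - ε)) (x - R (t + h) ε x) := by
    intro h ε hh hε hhs
    have hcomp := hR.2.1 (t + h) (s - h - ε) ε (by linarith) (by linarith) (le_of_lt hε)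
    have e1 : s - h - ε + ε = s - h := by ring
    rw [e1] at hcomp
    have hψh : ψ h = (R (t + h + ε) (s - h - ε)) ((R (t + h) ε) x) := by
      simp [hψdef, hcomp]
    have hψhe : ψ (h + ε) = (R (t + h + ε) (s - h - ε)) x := by
      have e2 : t + (h + ε) = t + h + ε := by ring
      have e3 : s - (h + ε) = s - h - ε := by ring
      simp [hψdef, e2, e3]
    rw [hψh, hψhe, ← map_sub]
  -- continuity of ψ on [0, s]
  have hψcont : ContinuousOn ψ (Icc 0 s) := by
    intro h₀ hh₀
    obtain ⟨h0l, h0r⟩ := hh₀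
    have hsplit : 𝓝[Icc 0 s] h₀ ≤ 𝓝[Ico 0 h₀] h₀ ⊔ 𝓝[Icc h₀ s] h₀ := by
      rw [← nhdsWithin_union]
      refine nhdsWithin_mono _ fun z hz => ?_
      rcases lt_or_ge z h₀ with h | h
      · exact Or.inl ⟨hz.1, h⟩
      · exact Or.inr ⟨h, hz.2⟩
    refine Tendsto.mono_left ?_ hsplit
    rw [tendsto_sup]
    constructor
    · -- left side
      rcases eq_or_lt_of_le h0l with h0 | h0
      · rw [← h0]
        simp [Ico_self, nhdsWithin_empty]
      · obtain ⟨y, -, hy'⟩ := ((hA.1 x).mp hx).2 (t + h₀) (by linarith)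
        have hF : Tendsto (fun ε : ℝ => R (t + h₀ - ε) ε x) (𝓝[>] (0:ℝ)) (𝓝 x) := by
          have h1 : Tendsto (fun ε : ℝ => x + ε • (ε⁻¹ • (R (t + h₀ - ε) ε x - x)))
              (𝓝[>] (0:ℝ)) (𝓝 (x + (0:ℝ) • y)) := by
            refine tendsto_const_nhds.add (Tendsto.smul ?_ hy')
            exact tendsto_id.mono_left nhdsWithin_le_nhds
          rw [zero_smul, add_zero] at h1
          refine h1.congr' ?_
          filter_upwards [self_mem_nhdsWithin] with ε hε
          rw [smul_inv_smul₀ (ne_of_gt hε)]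
          abel
        have hmap : Tendsto (fun z : ℝ => h₀ - z) (𝓝[Ico 0 h₀] h₀) (𝓝[>] (0:ℝ)) := by
          apply tendsto_nhdsWithin_of_tendsto_nhds_of_eventually_within
          · have : Tendsto (fun z : ℝ => h₀ - z) (𝓝 h₀) (𝓝 (h₀ - h₀)) :=
              (continuous_const.sub continuous_id).tendsto h₀
            rw [sub_self] at this
            exact this.mono_left nhdsWithin_le_nhds
          · filter_upwards [self_mem_nhdsWithin] with z hz
            exact sub_pos.2 hz.2
        have hcomp2 : Tendsto (fun z : ℝ => R (t + h₀ - (h₀ - z)) (h₀ - z) x)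
            (𝓝[Ico 0 h₀] h₀) (𝓝 x) := hF.comp hmap
        have hzero : Tendsto (fun z : ℝ => ψ z - ψ h₀) (𝓝[Ico 0 h₀] h₀) (𝓝 0) := by
          apply squeeze_zero_norm'
            (a := fun z => M (t + s) * ‖x - R (t + h₀ - (h₀ - z)) (h₀ - z) x‖)
          · filter_upwards [self_mem_nhdsWithin] with z hz
            have hε : 0 < h₀ - z := sub_pos.2 hz.2
            have h1 := hψid z (h₀ - z) hz.1 hε (by linarith)
            have e2 : z + (h₀ - z) = h₀ := by ring
            rw [e2] at h1
            have e3 : t + h₀ - (h₀ - z) = t + z := by ring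
            rw [e3]
            rw [← neg_sub, norm_neg, h1]
            refine le_trans ((R _ _).le_opNorm _) ?_
            apply mul_le_mul_of_nonneg_right _ (norm_nonneg _)
            have := hMb (t + z + (h₀ - z)) (s - z - (h₀ - z)) (by linarith) (by linarith)
            have e5 : t + z + (h₀ - z) + (s - z - (h₀ - z)) = t + s := by ring
            rwa [e5] at this
          · have : Tendsto (fun z : ℝ => ‖x - R (t + h₀ - (h₀ - z)) (h₀ - z) x‖)
                (𝓝[Ico 0 h₀] h₀) (𝓝 ‖x - x‖) :=
              (tendsto_const_nhds.sub hcomp2).norm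
            rw [sub_self, norm_zero] at this
            simpa using this.const_mul (M (t + s))
        have := hzero.add (tendsto_const_nhds (x := ψ h₀))
        simpa using this
    · -- right side
      have hIcc : Icc h₀ s = insert h₀ (Ioc h₀ s) := (Set.Ioc_insert_left h0r).symm
      rw [hIcc, nhdsWithin_insert, tendsto_sup]
      refine ⟨tendsto_pure_nhds _ _, ?_⟩
      have hmap : Tendsto (fun z : ℝ => z - h₀) (𝓝[Ioc h₀ s] h₀) (𝓝[Ici 0] (0:ℝ)) := by
        apply tendsto_nhdsWithin_of_tendsto_nhds_of_eventually_within
        · have : Tendsto (fun z : ℝ => z - h₀) (𝓝 h₀) (𝓝 (h₀ - h₀)) :=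
            (continuous_id.sub continuous_const).tendsto h₀
          rw [sub_self] at this
          exact this.mono_left nhdsWithin_le_nhds
        · filter_upwards [self_mem_nhdsWithin] with z hz
          exact le_of_lt (sub_pos.2 hz.1)
      have hcomp2 : Tendsto (fun z : ℝ => R (t + h₀) (z - h₀) x) (𝓝[Ioc h₀ s] h₀) (𝓝 x) :=
        (hR.2.2.1 (t + h₀) (by linarith) x).comp hmap
      have hzero : Tendsto (fun z : ℝ => ψ z - ψ h₀) (𝓝[Ioc h₀ s] h₀) (𝓝 0) := by
        apply squeeze_zero_norm' (a := fun z => M (t + s) * ‖x - R (t + h₀) (z - h₀) x‖)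
        · filter_upwards [self_mem_nhdsWithin] with z hz
          have hε : 0 < z - h₀ := sub_pos.2 hz.1
          have h1 := hψid h₀ (z - h₀) h0l hε (by linarith [hz.2])
          have e2 : h₀ + (z - h₀) = z := by ring
          rw [e2] at h1
          rw [h1]
          refine le_trans ((R _ _).le_opNorm _) ?_
          apply mul_le_mul_of_nonneg_right _ (norm_nonneg _)
          have := hMb (t + h₀ + (z - h₀)) (s - h₀ - (z - h₀)) (by linarith) (by linarith [hz.2])
          have e5 : t + h₀ + (z - h₀) + (s - h₀ - (z - h₀)) = t + s := by ring
          rwa [e5] at this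
        · have : Tendsto (fun z : ℝ => ‖x - R (t + h₀) (z - h₀) x‖)
              (𝓝[Ioc h₀ s] h₀) (𝓝 ‖x - x‖) := (tendsto_const_nhds.sub hcomp2).norm
          rw [sub_self, norm_zero] at this
          simpa using this.const_mul (M (t + s))
      have := hzero.add (tendsto_const_nhds (x := ψ h₀))
      simpa using this
  have hφcont : ContinuousOn φ (Icc 0 s) := by
    apply ContinuousOn.smul _ hψcont
    exact (Complex.continuous_exp.comp (continuous_const.mul Complex.continuous_ofReal)).continuousOn
  -- the fencing argument
  set g : ℝ → ℝ := fun h => ‖φ h - φ 0‖ with hgdef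
  have hgcont : ContinuousOn g (Icc 0 s) := (hφcont.sub continuousOn_const).norm
  have hg0 : g 0 = 0 := by simp [hgdef]
  have main : ∀ η : ℝ, 0 < η → g s ≤ (K * δ + η) * s := by
    intro η hη
    have hf' : ∀ h ∈ Ico 0 s, ∀ r, K * δ < r → ∃ᶠ z in 𝓝[>] h, slope g h z < r := by
      rintro h ⟨hh0, hhs⟩ r hr
      have hmap : Tendsto (fun z : ℝ => z - h) (𝓝[>] h) (𝓝[>] (0:ℝ)) := by
        apply tendsto_nhdsWithin_of_tendsto_nhds_of_eventually_within
        · have : Tendsto (fun z : ℝ => z - h) (𝓝 h) (𝓝 (h - h)) :=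
            (continuous_id.sub continuous_const).tendsto h
          rw [sub_self] at this
          exact this.mono_left nhdsWithin_le_nhds
        · filter_upwards [self_mem_nhdsWithin] with z hz
          exact sub_pos.2 (show h < z from hz)
      have h2 : Tendsto
          (fun z : ℝ => K * ‖(z - h)⁻¹ • (Complex.exp (lam * ((z - h : ℝ):ℂ)) • x - R (t + h) (z - h) x)‖)
          (𝓝[>] h) (𝓝 (K * δ)) := by
        have := ((hquot h hh0).comp hmap).norm
        rw [hδdef]
        exact this.const_mul K
      have h3 : ∀ᶠ z in 𝓝[>] h, K *
          ‖(z - h)⁻¹ • (Complex.exp (lam * ((z - h : ℝ):ℂ)) • x - R (t + h) (z - h) x)‖ < r :=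
        h2.eventually_lt_const hr
      have h1 : ∀ᶠ z in 𝓝[>] h, z ∈ Ioc h s := Ioc_mem_nhdsGT_of_mem ⟨le_rfl, hhs⟩
      refine ((h1.and h3).mono ?_).frequently
      rintro z ⟨hz, hlt⟩
      have hε : 0 < z - h := sub_pos.2 hz.1
      have hslope : slope g h z = (z - h)⁻¹ * (g z - g h) := by
        rw [slope_def_field]; ring
      have hgd : g z - g h ≤ ‖φ z - φ h‖ := by
        have := norm_sub_norm_le (φ z - φ 0) (φ h - φ 0)
        rwa [sub_sub_sub_cancel_right] at this
      have hb := hbound h (z - h) hh0 hε (by linarith [hz.2])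
      have e2 : h + (z - h) = z := by ring
      rw [e2] at hb
      have step : slope g h z ≤ K *
          ‖(z - h)⁻¹ • (Complex.exp (lam * ((z - h : ℝ):ℂ)) • x - R (t + h) (z - h) x)‖ := by
        rw [hslope, norm_smul, Real.norm_eq_abs, abs_of_pos (inv_pos.2 hε)]
        calc (z - h)⁻¹ * (g z - g h) ≤ (z - h)⁻¹ * ‖φ z - φ h‖ :=
              mul_le_mul_of_nonneg_left hgd (inv_pos.2 hε).le
          _ ≤ (z - h)⁻¹ * (K * ‖Complex.exp (lam * ((z - h : ℝ):ℂ)) • x - R (t + h) (z - h) x‖) :=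
              mul_le_mul_of_nonneg_left hb (inv_pos.2 hε).le
          _ = K * ((z - h)⁻¹ * ‖Complex.exp (lam * ((z - h : ℝ):ℂ)) • x - R (t + h) (z - h) x‖) := by
              ring
      exact lt_of_le_of_lt step hlt
    have hB' : ∀ h ∈ Ico 0 s, HasDerivWithinAt (fun h : ℝ => (K * δ + η) * h) (K * δ + η) (Ici h) h := by
      intro h _
      simpa using ((hasDerivAt_id h).const_mul (K * δ + η)).hasDerivWithinAt
    have := image_le_of_liminf_slope_right_lt_deriv_boundary' (f := g) (f' := fun _ => K * δ)
      (a := 0) (b := s) hgcont hf' (B := fun h => (K * δ + η) * h) (B' := fun _ => K * δ + η)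
      (by rw [hg0]; simp) ((continuous_const.mul continuous_id).continuousOn) hB'
      (fun h _ _ => lt_add_of_pos_right _ hη)
    exact this (right_mem_Icc.2 hs)
  have hgs : g s ≤ K * δ * s := by
    rcases eq_or_lt_of_le hs with h0 | h0
    · have := main 1 one_pos
      rw [← h0] at this ⊢
      simpa using this
    · refine le_of_forall_pos_le_add fun ε hε => ?_
      have := main (ε / s) (div_pos hε h0)
      calc g s ≤ (K * δ + ε / s) * s := this
        _ = K * δ * s + ε := by field_simp
  have hfinal : ‖Complex.exp (lam * (s:ℂ)) • x - R t s x‖ = g s := by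
    rw [hgdef]; simp only [hφ0, hφs]
  rw [hfinal]
  calc g s ≤ K * δ * s := hgs
    _ = s * (K * δ) := by ring

/-- Approximate point spectral inclusion: an approximate eigenvector of `A(t)` for `λ`
is an approximate eigenvector of `R(t,s)` for `e^{λs}`, so `e^{λs} ∈ σₐ(R(t,s))`. -/
theorem quasiSemigroup_approximate_spectral_inclusion
    [NormedAddCommGroup X] [NormedSpace ℂ X] [CompleteSpace X]
    (R : ℝ → ℝ → X →L[ℂ] X) (hR : IsQuasiSemigroup R)
    (A : ℝ → X → X) (D : Set X) (hA : IsGenerator R A D)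
    (hconst : ∀ t h : ℝ, 0 ≤ t → 0 ≤ h → A (t + h) = A t)
    (lam : ℂ) (t s : ℝ) (ht : 0 ≤ t) (hs : 0 ≤ s)
    (xseq : ℕ → X) (hmem : ∀ n, xseq n ∈ D) (hnorm : ∀ n, ‖xseq n‖ = 1)
    (happrox : Tendsto (fun n => ‖lam • xseq n - A t (xseq n)‖) atTop (nhds 0)) :
    Tendsto (fun n => ‖Complex.exp (lam * (s : ℂ)) • xseq n - R t s (xseq n)‖) atTop (nhds 0) ∧
    ¬ ∃ c : ℝ, 0 < c ∧ ∀ y : X, c * ‖y‖ ≤ ‖Complex.exp (lam * (s : ℂ)) • y - R t s y‖ := by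

  obtain ⟨M, hMc, hMm, hM1, hMb⟩ := hR.2.2.2
  set K : ℝ := M (t + s) * Real.exp (|lam.re| * s) with hKdef
  have hb : ∀ n, ‖Complex.exp (lam * (s : ℂ)) • xseq n - R t s (xseq n)‖ ≤
      s * (K * ‖lam • xseq n - A t (xseq n)‖) := fun n =>
    key_est R hR A D hA hconst lam t s ht hs M hM1 hMb (xseq n) (hmem n)
  have h1 : Tendsto (fun n => ‖Complex.exp (lam * (s : ℂ)) • xseq n - R t s (xseq n)‖)
      atTop (𝓝 0) := by
    apply squeeze_zero (fun n => norm_nonneg _) hb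
    have := happrox.const_mul (s * K)
    rw [mul_zero] at this
    refine this.congr fun n => by ring
  refine ⟨h1, ?_⟩
  rintro ⟨c, hc, hcb⟩
  have h2 : ∀ᶠ n in atTop, ‖Complex.exp (lam * (s : ℂ)) • xseq n - R t s (xseq n)‖ < c :=
    h1.eventually_lt_const hc
  obtain ⟨n, hn⟩ := h2.exists
  have h3 := hcb (xseq n)
  rw [hnorm n, mul_one] at h3
  exact absurd (lt_of_le_of_lt h3 hn) (lt_irrefl c)
end

section
/- Let T be a bounded semi-regular operator on a Banach space X (i.e., Rg(T) is closed and N(T) ⊆ Rg^∞(T) := ∩_{n≥1} Rg(T^n)). Then the operator T̂ : X/Rg^∞(T) → X/Rg^∞(T) induced by T on the quotient space is bounded below, i.e., there exists c > 0 with ‖T̂ x̂‖ ≥ c ‖x̂‖ for all x̂ ∈ X/Rg^∞(T). -/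
open Filter Topology MeasureTheory Set

variable {X : Type*}

/-- An injective continuous linear map with closed range between Banach spaces is
antilipschitz (open mapping theorem). -/
theorem aux_antilip {E F : Type*} [NormedAddCommGroup E] [NormedSpace ℂ E] [CompleteSpace E]
    [NormedAddCommGroup F] [NormedSpace ℂ F] [CompleteSpace F]
    (f : E →L[ℂ] F) (hinj : LinearMap.ker (f : E →ₗ[ℂ] F) = ⊥)
    (hcl : IsClosed (LinearMap.range (f : E →ₗ[ℂ] F) : Set F)) :
    ∃ K : NNReal, AntilipschitzWith K f := by
  haveI : CompleteSpace (LinearMap.range (f : E →ₗ[ℂ] F)) := hcl.completeSpace_coe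
  let g : E →L[ℂ] LinearMap.range (f : E →ₗ[ℂ] F) :=
    f.codRestrict _ fun x => LinearMap.mem_range_self _ x
  have h1 : LinearMap.ker (g : E →ₗ[ℂ] LinearMap.range (f : E →ₗ[ℂ] F)) = ⊥ := by
    rw [ContinuousLinearMap.ker_codRestrict]; exact hinj
  have h2 : LinearMap.range (g : E →ₗ[ℂ] LinearMap.range (f : E →ₗ[ℂ] F)) = ⊤ := by
    rw [eq_top_iff]
    rintro ⟨y, x, rfl⟩ -
    exact ⟨x, rfl⟩
  let e := ContinuousLinearEquiv.ofBijective g h1 h2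
  have h := e.antilipschitz
  exact ⟨_, fun x y => h x y⟩

/-- The image in the quotient `E ⧸ N` of a closed set which is a submodule containing `N`
is closed. -/
theorem aux_quot_closed {E : Type*} [NormedAddCommGroup E] [NormedSpace ℂ E]
    (N M : Submodule ℂ E) (hNM : N ≤ M) (hM : IsClosed (M : Set E)) :
    IsClosed (N.mkQ '' (M : Set E)) := by
  rw [← isOpen_compl_iff] at hM ⊢
  have hcompl : (N.mkQ '' (M : Set E))ᶜ = N.mkQ '' ((M : Set E)ᶜ) := by
    ext y
    obtain ⟨x, rfl⟩ := N.mkQ_surjective y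
    constructor
    · intro hy
      refine ⟨x, fun hx => hy ⟨x, hx, rfl⟩, rfl⟩
    · rintro ⟨z, hz, hzx⟩ ⟨m, hm, hmx⟩
      apply hz
      have h1 : N.mkQ (m - z) = N.mkQ x - N.mkQ x := by
        rw [map_sub, hmx, hzx, sub_self]
      rw [sub_self] at h1
      have h2 : m - z ∈ N := by
        rwa [← Submodule.Quotient.mk_eq_zero]
      have : z = m - (m - z) := by abel
      rw [this]
      exact M.sub_mem hm (hNM h2)
  rw [hcompl]
  exact N.isOpenMap_mkQ _ hM

/-- If `f` has closed range and `M` is a closed submodule containing `ker f`, then `f(M)`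
is closed. -/
theorem aux_closed_image {E : Type*} [NormedAddCommGroup E] [NormedSpace ℂ E] [CompleteSpace E]
    (f : E →L[ℂ] E) (hcl : IsClosed (LinearMap.range (f : E →ₗ[ℂ] E) : Set E))
    {M : Submodule ℂ E} (hM : IsClosed (M : Set E)) (hker : LinearMap.ker (f : E →ₗ[ℂ] E) ≤ M) :
    IsClosed ((M.map (f : E →ₗ[ℂ] E) : Submodule ℂ E) : Set E) := by
  set K : Submodule ℂ E := LinearMap.ker (f : E →ₗ[ℂ] E) with hK
  haveI hKc : IsClosed (K : Set E) := ContinuousLinearMap.isClosed_ker f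
  let g : E ⧸ K →ₗ[ℂ] E := K.liftQ (f : E →ₗ[ℂ] E) le_rfl
  have hgmk : ∀ x : E, g (K.mkQ x) = f x := fun x => rfl
  have hgc : Continuous g := by
    rw [(K.isOpenQuotientMap_mkQ).isQuotientMap.continuous_iff]
    have : (g ∘ K.mkQ) = f := funext fun x => hgmk x
    rw [this]
    exact f.continuous
  let G : E ⧸ K →L[ℂ] E := ⟨g, hgc⟩
  have hGinj : LinearMap.ker (G : E ⧸ K →ₗ[ℂ] E) = ⊥ := by
    show LinearMap.ker g = ⊥
    exact Submodule.ker_liftQ_eq_bot _ _ _ le_rfl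
  have hGrange : LinearMap.range (G : E ⧸ K →ₗ[ℂ] E) = LinearMap.range (f : E →ₗ[ℂ] E) := by
    show LinearMap.range g = _
    rw [Submodule.range_liftQ]
  obtain ⟨c, hc⟩ := aux_antilip G hGinj (by rw [hGrange]; exact hcl)
  have himg : ((M.map (f : E →ₗ[ℂ] E) : Submodule ℂ E) : Set E)
      = G '' (K.mkQ '' (M : Set E)) := by
    rw [← Set.image_comp]
    ext z
    simp only [Submodule.map_coe, Set.mem_image, Function.comp_apply]
    constructor
    · rintro ⟨m, hm, rfl⟩; exact ⟨m, hm, (hgmk m).symm ▸ rfl⟩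
    · rintro ⟨m, hm, rfl⟩; exact ⟨m, hm, (hgmk m)⟩
  rw [himg]
  exact (hc.isClosedEmbedding G.uniformContinuous).isClosedMap _
    (aux_quot_closed K M hker hM)

/-- If `T` is a bounded semi-regular operator (closed range, kernel contained in the
hyper-range `N = ⨅_{n ≥ 1} Rg(T^n)`), then the operator induced by `T` on `X ⧸ N`
is bounded below. -/
theorem semiRegular_quotient_bounded_below
    [NormedAddCommGroup X] [NormedSpace ℂ X] [CompleteSpace X]
    (T : X →L[ℂ] X)
    (hclosed : IsClosed (LinearMap.range (T : X →ₗ[ℂ] X) : Set X))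
    (N : Submodule ℂ X) (hN : N = ⨅ n ∈ {n : ℕ | 1 ≤ n}, LinearMap.range ((T ^ n : X →L[ℂ] X) : X →ₗ[ℂ] X))
    (hker : LinearMap.ker (T : X →ₗ[ℂ] X) ≤ N)
    (hinv : N ≤ N.comap (T : X →ₗ[ℂ] X)) :
    ∃ c : ℝ, 0 < c ∧ ∀ y : X ⧸ N, c * ‖y‖ ≤ ‖Submodule.mapQ N N (T : X →ₗ[ℂ] X) hinv y‖ := by
  -- N is contained in every range (T^n), n ≥ 1
  have hNle : ∀ n : ℕ, 1 ≤ n → N ≤ LinearMap.range ((T ^ n : X →L[ℂ] X) : X →ₗ[ℂ] X) := by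
    intro n hn
    rw [hN]
    exact biInf_le _ hn
  -- ker T is contained in every range (T^n)
  have hkerle : ∀ n : ℕ, LinearMap.ker (T : X →ₗ[ℂ] X) ≤ LinearMap.range ((T ^ n : X →L[ℂ] X) : X →ₗ[ℂ] X) := by
    intro n
    rcases Nat.eq_zero_or_pos n with h | h
    · subst h
      rw [pow_zero]
      intro x _
      exact ⟨x, rfl⟩
    · exact le_trans hker (hNle n h)
  -- range (T^(n+1)) = T(range (T^n))
  have hpow : ∀ n : ℕ, LinearMap.range ((T ^ (n + 1) : X →L[ℂ] X) : X →ₗ[ℂ] X)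
      = (LinearMap.range ((T ^ n : X →L[ℂ] X) : X →ₗ[ℂ] X)).map (T : X →ₗ[ℂ] X) := by
    intro n
    ext x
    simp only [LinearMap.mem_range, Submodule.mem_map, ContinuousLinearMap.coe_coe]
    constructor
    · rintro ⟨y, rfl⟩
      exact ⟨(T ^ n) y, ⟨y, rfl⟩, by simp [pow_succ', ContinuousLinearMap.mul_apply]⟩
    · rintro ⟨z, ⟨y, rfl⟩, rfl⟩
      exact ⟨y, by simp [pow_succ', ContinuousLinearMap.mul_apply]⟩
  -- every range (T^n) is closed
  have hclosedn : ∀ n : ℕ, IsClosed ((LinearMap.range ((T ^ n : X →L[ℂ] X) : X →ₗ[ℂ] X) : Submodule ℂ X) : Set X) := by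
    intro n
    induction n with
    | zero => simp only [pow_zero]; convert isClosed_univ; ext x; simp
    | succ n ih =>
        rw [hpow n]
        exact aux_closed_image T hclosed ih (hkerle n)
  -- N is closed
  have hNcl : IsClosed (N : Set X) := by
    rw [hN]
    have : ((⨅ n ∈ {n : ℕ | 1 ≤ n}, LinearMap.range ((T ^ n : X →L[ℂ] X) : X →ₗ[ℂ] X) : Submodule ℂ X) : Set X)
        = ⋂ n ∈ {n : ℕ | 1 ≤ n}, ((LinearMap.range ((T ^ n : X →L[ℂ] X) : X →ₗ[ℂ] X) : Submodule ℂ X) : Set X) := by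
      simp [Submodule.coe_iInf]
    rw [this]
    exact isClosed_biInter fun n _ => hclosedn n
  haveI : IsClosed (N : Set X) := hNcl
  -- the induced map on the quotient
  set Q : (X ⧸ N) →ₗ[ℂ] (X ⧸ N) := Submodule.mapQ N N (T : X →ₗ[ℂ] X) hinv with hQ
  have hQmk : ∀ x : X, Q (N.mkQ x) = N.mkQ (T x) := fun x => rfl
  have hQc : Continuous Q := by
    rw [(N.isOpenQuotientMap_mkQ).isQuotientMap.continuous_iff]
    have : (Q ∘ N.mkQ) = fun x => N.mkQ (T x) := funext fun x => hQmk x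
    rw [this]
    exact (N.isOpenQuotientMap_mkQ).continuous.comp T.continuous
  let QL : (X ⧸ N) →L[ℂ] (X ⧸ N) := ⟨Q, hQc⟩
  -- QL is injective
  have hQinj : LinearMap.ker (QL : (X ⧸ N) →ₗ[ℂ] (X ⧸ N)) = ⊥ := by
    rw [LinearMap.ker_eq_bot']
    intro m hm
    obtain ⟨x, rfl⟩ := N.mkQ_surjective m
    have hTx : T x ∈ N := by
      have := hQmk x
      rw [show (QL : (X ⧸ N) →ₗ[ℂ] (X ⧸ N)) (N.mkQ x) = Q (N.mkQ x) from rfl] at hm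
      rw [hm] at this
      exact (Submodule.Quotient.mk_eq_zero N).mp this.symm
    have hxN : x ∈ N := by
      rw [hN]
      refine Submodule.mem_iInf _ |>.mpr fun n => Submodule.mem_iInf _ |>.mpr fun hn => ?_
      -- T x ∈ range (T^(n+1)), so x ∈ range (T^n)
      have h1 : T x ∈ LinearMap.range ((T ^ (n + 1) : X →L[ℂ] X) : X →ₗ[ℂ] X) := hNle (n + 1) (Nat.le_add_left 1 n) hTx
      obtain ⟨y, hy⟩ := h1
      have h2 : T (x - (T ^ n) y) = 0 := by
        have : (T ^ (n + 1)) y = T ((T ^ n) y) := by rw [pow_succ']; rfl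
        rw [ContinuousLinearMap.coe_coe] at hy
        rw [map_sub, ← this, hy, sub_self]
      have h3 : x - (T ^ n) y ∈ LinearMap.range ((T ^ n : X →L[ℂ] X) : X →ₗ[ℂ] X) := hkerle n h2
      have : x = (x - (T ^ n) y) + (T ^ n) y := by abel
      rw [this]
      exact (LinearMap.range ((T ^ n : X →L[ℂ] X) : X →ₗ[ℂ] X)).add_mem h3 ⟨y, rfl⟩
    exact (Submodule.Quotient.mk_eq_zero N).mpr hxN
  -- range of QL is closed
  have hQrange : IsClosed ((LinearMap.range (QL : (X ⧸ N) →ₗ[ℂ] (X ⧸ N)) : Submodule ℂ (X ⧸ N)) : Set (X ⧸ N)) := by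
    have himg : ((LinearMap.range (QL : (X ⧸ N) →ₗ[ℂ] (X ⧸ N)) : Submodule ℂ (X ⧸ N)) : Set (X ⧸ N))
        = N.mkQ '' ((LinearMap.range (T : X →ₗ[ℂ] X) : Submodule ℂ X) : Set X) := by
      ext z
      simp only [SetLike.mem_coe, LinearMap.mem_range, Set.mem_image]
      constructor
      · rintro ⟨m, rfl⟩
        obtain ⟨x, rfl⟩ := N.mkQ_surjective m
        exact ⟨T x, ⟨x, rfl⟩, (hQmk x).symm⟩
      · rintro ⟨w, ⟨x, rfl⟩, rfl⟩
        exact ⟨N.mkQ x, hQmk x⟩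
    rw [himg]
    refine aux_quot_closed N (LinearMap.range (T : X →ₗ[ℂ] X)) ?_ hclosed
    have := hNle 1 le_rfl
    rwa [pow_one] at this
  obtain ⟨K, hK⟩ := aux_antilip QL hQinj hQrange
  have hKpos : (0 : ℝ) < (K : ℝ) + 1 := by positivity
  refine ⟨((K : ℝ) + 1)⁻¹, inv_pos.mpr hKpos, fun y => ?_⟩
  have h1 : ‖y‖ ≤ (K : ℝ) * ‖QL y‖ := by
    have := hK.le_mul_dist y 0
    simpa [dist_eq_norm, map_zero] using this
  have h2 : ‖y‖ ≤ ((K : ℝ) + 1) * ‖QL y‖ :=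
    h1.trans (by nlinarith [norm_nonneg (QL y)])
  calc ((K : ℝ) + 1)⁻¹ * ‖y‖ ≤ ((K : ℝ) + 1)⁻¹ * (((K : ℝ) + 1) * ‖QL y‖) := by
        exact mul_le_mul_of_nonneg_left h2 (inv_pos.mpr hKpos).le
    _ = ‖QL y‖ := by field_simp
end
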